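/- arXiv:0807.2303 — 2 statements merged into one kernel-verified Lean document; each statement's English description precedes it below -/
import Mathlib

section
/- An infinite word x is rich if and only if any two factors u and v of x having the same longest palindromic prefix and the same longest palindromic suffix are equal. -/
/-- The finset of (distinct) palindromic factors of a finite word `w`,
including the empty word. -/
def palFactors {A : Type*} [DecidableEq A] (w : List A) : Finset (List A) :=
  ((w.inits.flatMap List.tails).filter (fun u => u.reverse = u)).toFinset

/-- A finite word `w` is rich if it has exactly `|w| + 1` distinct palindromic factors. -/
def Rich {A : Type*} [DecidableEq A] (w : List A) : Prop :=
  (palFactors w).card = w.length + 1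

/-- A finite word `u` is a factor of the infinite word `x : ℕ → A` if it occurs
at some position `i` in `x`. -/
def FactorOfInf {A : Type*} (u : List A) (x : ℕ → A) : Prop :=
  ∃ i : ℕ, u = (List.range u.length).map fun k => x (i + k)

/-- An infinite word is rich if all of its factors are rich. -/
def RichInf {A : Type*} [DecidableEq A] (x : ℕ → A) : Prop :=
  ∀ u : List A, FactorOfInf u x → Rich u

/-- `p` is the longest palindromic prefix of `u`. -/
def LongestPalPrefix {A : Type*} (p u : List A) : Prop :=
  p <+: u ∧ p.reverse = p ∧ ∀ p' : List A, p' <+: u → p'.reverse = p' → p'.length ≤ p.length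

/-- `q` is the longest palindromic suffix of `u`. -/
def LongestPalSuffix {A : Type*} (q u : List A) : Prop :=
  q <:+ u ∧ q.reverse = q ∧ ∀ q' : List A, q' <:+ u → q'.reverse = q' → q'.length ≤ q.length


open List
set_option linter.unusedSectionVars false

section Aux
variable {A : Type*} [DecidableEq A]

variable {A : Type*} [DecidableEq A]

lemma suffix_of_suffix_le {u v l : List A} (h1 : u <:+ l) (h2 : v <:+ l)
    (h : u.length ≤ v.length) : u <:+ v := by
  obtain ⟨a, rfl⟩ := h2
  have h4 := suffix_iff_eq_drop.1 h1
  rw [length_append] at h4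
  have harg : a.length + v.length - u.length = a.length + (v.length - u.length) := by omega
  rw [h4, harg, drop_length_add_append]
  exact drop_suffix _ _

/-- longest palindromic suffix -/
def lps : List A → List A
  | [] => []
  | a :: w => if (a::w).reverse = a::w then a::w else lps w

lemma lps_suffix (w : List A) : lps w <:+ w := by
  induction w with
  | nil => simp [lps]
  | cons a w ih =>
    rw [lps]
    split
    · exact suffix_rfl
    · exact ih.trans (suffix_cons a w)

lemma lps_pal (w : List A) : (lps w).reverse = lps w := by
  induction w with
  | nil => simp [lps]
  | cons a w ih =>
    rw [lps]
    split
    · assumption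
    · exact ih

lemma lps_longest {s w : List A} (hs : s <:+ w) (hp : s.reverse = s) :
    s.length ≤ (lps w).length := by
  induction w with
  | nil => rw [suffix_nil.1 hs]; simp
  | cons a w ih =>
    rw [lps]
    split
    · simpa using hs.length_le
    · rcases suffix_cons_iff.1 hs with h | h
      · exact absurd (h ▸ hp) (by assumption)
      · exact ih h

/-- longest palindromic prefix -/
def lpp (w : List A) : List A := (lps w.reverse).reverse

lemma lpp_prefix (w : List A) : lpp w <+: w := by
  simpa [lpp] using reverse_prefix.2 (lps_suffix w.reverse)

lemma lpp_pal (w : List A) : (lpp w).reverse = lpp w := by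
  simp [lpp, lps_pal]

lemma lpp_longest {s w : List A} (hs : s <+: w) (hp : s.reverse = s) :
    s.length ≤ (lpp w).length := by
  have h1 : s.reverse <:+ w.reverse := reverse_suffix.2 hs
  have := lps_longest h1 (by rw [hp]; exact hp)
  simpa [lpp] using this

lemma lps_eq_iff {q u : List A} :
    LongestPalSuffix q u ↔ q = lps u := by
  constructor
  · rintro ⟨h1, h2, h3⟩
    have l1 : q.length ≤ (lps u).length := lps_longest h1 h2
    have l2 : (lps u).length ≤ q.length := h3 _ (lps_suffix u) (lps_pal u)
    exact (suffix_of_suffix_le h1 (lps_suffix u) l1).eq_of_length (le_antisymm l1 l2)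
  · rintro rfl
    exact ⟨lps_suffix u, lps_pal u, fun s hs hp => lps_longest hs hp⟩

lemma lpp_eq_iff {p u : List A} :
    LongestPalPrefix p u ↔ p = lpp u := by
  constructor
  · rintro ⟨h1, h2, h3⟩
    have l1 : p.length ≤ (lpp u).length := lpp_longest h1 h2
    have l2 : (lpp u).length ≤ p.length := h3 _ (lpp_prefix u) (lpp_pal u)
    exact (prefix_of_prefix_length_le h1 (lpp_prefix u) l1).eq_of_length (le_antisymm l1 l2)
  · rintro rfl
    exact ⟨lpp_prefix u, lpp_pal u, fun s hs hp => lpp_longest hs hp⟩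

lemma lps_reverse (w : List A) : lps w.reverse = lpp w := by
  rw [lpp, lps_pal]

lemma lpp_reverse (w : List A) : lpp w.reverse = lps w := by
  rw [lpp, reverse_reverse, lps_pal]
/-- `z` occurs in `w` ending at position `t`. -/
def Occ (z w : List A) (t : ℕ) : Prop := t ≤ w.length ∧ z <:+ w.take t

lemma Occ.len_le {z w : List A} {t : ℕ} (h : Occ z w t) : z.length ≤ t := by
  have := h.2.length_le
  simp [length_take, Nat.le_min] at this
  exact this.1

lemma Occ.infix {z w : List A} {t : ℕ} (h : Occ z w t) : z <:+: w :=
  h.2.isInfix.trans (take_prefix t w).isInfix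

lemma infix_iff_occ {z w : List A} : z <:+: w ↔ ∃ t, Occ z w t := by
  constructor
  · rintro ⟨s, t, rfl⟩
    refine ⟨s.length + z.length, ?_, ?_⟩
    · simp [Nat.add_le_add_iff_left]
    · rw [append_assoc, take_length_add_append, take_left]
      exact suffix_append s z
  · rintro ⟨t, h⟩
    exact h.infix

lemma occ_full {z w : List A} (h : z <:+ w) : Occ z w w.length :=
  ⟨le_rfl, by simpa [take_length] using h⟩

lemma occ_take {z w : List A} {t c : ℕ} (h : Occ z w t) (htc : t ≤ c) :
    Occ z (w.take c) t := by
  have h1 := h.1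
  refine ⟨by simp [length_take]; omega, ?_⟩
  rw [take_take, min_eq_left htc]
  exact h.2

lemma occ_of_occ_take {z w : List A} {t c : ℕ} (h : Occ z (w.take c) t) :
    Occ z w t := by
  have h1 := h.1
  simp [length_take] at h1
  refine ⟨by omega, ?_⟩
  have := h.2
  rwa [take_take, min_eq_left (by omega)] at this

lemma occ_shift {z w : List A} {m t : ℕ} (hm : m ≤ w.length) (h : Occ z (w.drop m) t) :
    Occ z w (m + t) := by
  have h1 := h.1
  simp [length_drop] at h1
  refine ⟨by omega, ?_⟩
  have := h.2
  rw [take_drop] at this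
  exact this.trans (drop_suffix _ _)

lemma prefix_drop_of_occ {z w : List A} {t : ℕ} (h : Occ z w t) :
    z <+: w.drop (t - z.length) := by
  have hz := h.len_le
  have h2 := suffix_iff_eq_drop.1 h.2
  rw [length_take, min_eq_left h.1] at h2
  rw [drop_take] at h2
  have h3 : take (t - (t - z.length)) (drop (t - z.length) w) <+: drop (t - z.length) w :=
    take_prefix _ _
  rwa [← h2] at h3

lemma occ_of_prefix_drop {z w : List A} {m : ℕ} (hm : m ≤ w.length)
    (h : z <+: w.drop m) : Occ z w (m + z.length) := by
  have hz : z.length ≤ w.length - m := by simpa [length_drop] using h.length_le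
  refine ⟨by omega, ?_⟩
  have h2 := prefix_iff_eq_take.1 h
  rw [take_drop] at h2
  have h3 : drop m (take (m + z.length) w) <:+ take (m + z.length) w := drop_suffix _ _
  rwa [← h2] at h3

/-- an occurrence of `z` inside an occurrence of `u` gives an occurrence of `z` in `u`. -/
lemma occ_within {u z w : List A} {c t : ℕ} (hu : Occ u w c) (hz : Occ z w t)
    (h1 : c - u.length + z.length ≤ t) (h2 : t ≤ c) :
    Occ z u (t - (c - u.length)) := by
  have hcu := hu.len_le
  have hzl := hz.len_le
  obtain ⟨s, hs⟩ := hu.2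
  have hsl : s.length = c - u.length := by
    have := congrArg List.length hs
    simp [length_take, min_eq_left hu.1] at this
    omega
  have hz2 : z <:+ s ++ u.take (t - s.length) := by
    have e1 : w.take t = s ++ u.take (t - s.length) := by
      rw [← min_eq_left h2, ← take_take, ← hs, take_append,
        take_of_length_le (by omega : s.length ≤ t)]
      simp [min_eq_left h2]
    rw [← e1]
    exact hz.2
  have hlen : z.length ≤ (u.take (t - s.length)).length := by
    simp [length_take]
    omega
  have hzu : z <:+ u.take (t - s.length) :=
    suffix_of_suffix_le hz2 (suffix_append _ _) hlen
  rw [hsl] at hzu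
  exact ⟨by omega, hzu⟩
lemma infix_iff_suffix_prefix {u w : List A} : u <:+: w ↔ ∃ t, u <:+ t ∧ t <+: w := by
  constructor
  · rintro ⟨s, t, rfl⟩
    exact ⟨s ++ u, suffix_append s u, prefix_append _ _⟩
  · rintro ⟨t, h1, h2⟩
    exact h1.isInfix.trans h2.isInfix

lemma mem_palFactors {u w : List A} :
    u ∈ palFactors w ↔ u <:+: w ∧ u.reverse = u := by
  rw [palFactors]
  simp only [List.mem_toFinset, List.mem_filter, List.mem_flatMap, mem_inits, mem_tails,
    decide_eq_true_eq]
  rw [and_congr_left_iff]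
  intro _
  rw [infix_iff_suffix_prefix]
  constructor
  · rintro ⟨t, h1, h2⟩; exact ⟨t, h2, h1⟩
  · rintro ⟨t, h1, h2⟩; exact ⟨t, h2, h1⟩

lemma palFactors_nil : palFactors ([] : List A) = {[]} := by
  ext u
  simp [mem_palFactors, infix_nil]
  rintro rfl
  simp

lemma lps_length_pos {w : List A} (hw : w ≠ []) : 0 < (lps w).length := by
  have h1 : [w.getLast hw] <:+ w := ⟨w.dropLast, dropLast_append_getLast hw⟩
  have := lps_longest h1 (by simp)
  simp at this; exact this

lemma palFactors_concat (w : List A) (a : A) :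
    palFactors (w ++ [a]) = insert (lps (w ++ [a])) (palFactors w) := by
  ext u
  simp only [mem_palFactors, Finset.mem_insert]
  constructor
  · rintro ⟨hinf, hpal⟩
    by_cases hw : u <:+: w
    · exact Or.inr ⟨hw, hpal⟩
    · -- u is a suffix of w ++ [a]
      obtain ⟨s, t, hst⟩ := hinf
      rcases eq_nil_or_concat t with rfl | ⟨t', a', rfl⟩
      · have hsuf : u <:+ w ++ [a] := by
          refine ⟨s, ?_⟩
          simpa using hst
        have hLsuf : lps (w ++ [a]) <:+ w ++ [a] := lps_suffix _
        have hle : u.length ≤ (lps (w ++ [a])).length := lps_longest hsuf hpal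
        have huL : u <:+ lps (w ++ [a]) := suffix_of_suffix_le hsuf hLsuf hle
        by_cases heq : u = lps (w ++ [a])
        · exact Or.inl heq
        · exfalso
          apply hw
          have hlt : u.length < (lps (w ++ [a])).length :=
            lt_of_le_of_ne hle (fun h => heq (huL.eq_of_length h))
          have hupre : u <+: lps (w ++ [a]) := by
            have h5 := reverse_prefix.2 huL
            rwa [hpal, lps_pal] at h5
          have h2 : u <+: (lps (w ++ [a])).dropLast := by
            rw [dropLast_eq_take, prefix_iff_eq_take.1 hupre]
            exact take_prefix_take_left (by omega)
          obtain ⟨s', hs'⟩ := hLsuf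
          have hL0 : lps (w ++ [a]) ≠ [] := by
            intro h
            rw [h] at hlt
            simp at hlt
          have hsw : s' ++ (lps (w ++ [a])).dropLast = w := by
            have h6 := congrArg List.dropLast hs'
            rwa [dropLast_append_of_ne_nil hL0, dropLast_concat] at h6
          have h4 : (lps (w ++ [a])).dropLast <:+: s' ++ (lps (w ++ [a])).dropLast :=
            ⟨s', [], by simp⟩
          rw [hsw] at h4
          exact h2.isInfix.trans h4
      · left
        exfalso
        apply hw
        rw [concat_eq_append, ← append_assoc] at hst
        have h7 := (append_inj' hst (by simp)).1
        exact ⟨s, t', by rw [← h7, append_assoc]⟩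
  · rintro (rfl | ⟨hinf, hpal⟩)
    · exact ⟨(lps_suffix _).isInfix, lps_pal _⟩
    · exact ⟨hinf.trans (prefix_append w [a]).isInfix, hpal⟩

lemma card_palFactors_le (w : List A) : (palFactors w).card ≤ w.length + 1 := by
  induction w using List.reverseRecOn with
  | nil => simp [palFactors_nil]
  | append_singleton w a ih =>
    rw [palFactors_concat]
    calc (insert (lps (w ++ [a])) (palFactors w)).card ≤ (palFactors w).card + 1 :=
          Finset.card_insert_le _ _
    _ ≤ w.length + 1 + 1 := by omega
    _ = (w ++ [a]).length + 1 := by simp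

lemma rich_nil : Rich ([] : List A) := by
  rw [Rich, palFactors_nil]
  simp

lemma rich_concat_iff {w : List A} {a : A} :
    Rich (w ++ [a]) ↔ Rich w ∧ lps (w ++ [a]) ∉ palFactors w := by
  have hcard := card_palFactors_le w
  rw [Rich, Rich, palFactors_concat]
  by_cases h : lps (w ++ [a]) ∈ palFactors w
  · rw [Finset.insert_eq_self.2 h]
    simp only [length_append, length_singleton]
    constructor
    · intro hc; omega
    · rintro ⟨-, hn⟩; exact absurd h hn
  · rw [Finset.card_insert_of_notMem h]
    simp only [length_append, length_singleton]
    constructor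
    · intro hc; exact ⟨by omega, h⟩
    · rintro ⟨hc, -⟩; omega

lemma rich_lps_not_infix_dropLast {w : List A} (hr : Rich w) (hw : w ≠ []) :
    ¬ (lps w <:+: w.dropLast) := by
  rcases eq_nil_or_concat w with rfl | ⟨w', a, rfl⟩
  · exact absurd rfl hw
  · rw [concat_eq_append] at *
    rw [dropLast_concat]
    intro hinf
    exact (rich_concat_iff.1 hr).2 (mem_palFactors.2 ⟨hinf, lps_pal _⟩)

/-- unioccurrence of the longest palindromic suffix in a rich word -/
lemma occ_lps_eq_length {w : List A} (hr : Rich w) (hw : w ≠ []) {t : ℕ}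
    (h : Occ (lps w) w t) : t = w.length := by
  by_contra hne
  have ht : t < w.length := lt_of_le_of_ne h.1 hne
  apply rich_lps_not_infix_dropLast hr hw
  have h2 : w.take t <+: w.dropLast := by
    rw [dropLast_eq_take]
    exact take_prefix_take_left (by omega)
  exact h.2.isInfix.trans h2.isInfix

lemma palFactors_reverse (w : List A) : palFactors w.reverse = palFactors w := by
  ext u
  simp only [mem_palFactors]
  rw [and_congr_left_iff]
  intro hpal
  constructor
  · intro h
    have := reverse_infix.2 h
    rwa [hpal, reverse_reverse] at this
  · intro h
    have := reverse_infix.2 h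
    rwa [hpal] at this

lemma rich_reverse {w : List A} (hr : Rich w) : Rich w.reverse := by
  rwa [Rich, palFactors_reverse, length_reverse]

lemma tail_reverse_eq (w : List A) : (w.drop 1).reverse = w.reverse.dropLast := by
  rcases eq_nil_or_concat w with rfl | ⟨w', a, rfl⟩
  · simp
  · rw [dropLast_eq_take, length_reverse, take_reverse]
    congr 1
    have : w'.length + 1 - (w'.length + 1 - 1) = 1 := by omega
    simp [this]

lemma rich_lpp_not_infix_tail {w : List A} (hr : Rich w) (hw : w ≠ []) :
    ¬ (lpp w <:+: w.drop 1) := by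
  intro hinf
  have h1 := reverse_infix.2 hinf
  rw [lpp_pal, tail_reverse_eq, ← lps_reverse] at h1
  exact rich_lps_not_infix_dropLast (rich_reverse hr) (by simpa using hw) h1
lemma occ_reverse {z r : List A} {t : ℕ} (h : Occ z r.reverse t) :
    Occ z.reverse r (r.length - t + z.length) := by
  have h1 := h.1
  rw [length_reverse] at h1
  have hz := h.len_le
  have h2 := h.2
  rw [take_reverse] at h2
  have h3 : z.reverse <+: r.drop (r.length - t) := by
    have h4 := reverse_prefix.2 h2
    rwa [reverse_reverse] at h4
  have h5 := occ_of_prefix_drop (by omega) h3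
  simpa using h5

def CompleteReturn (P r : List A) : Prop :=
  P <+: r ∧ P <:+ r ∧ ∀ t, Occ P r t → t = P.length ∨ t = r.length

theorem complete_return_pal : ∀ (n : ℕ) (w : List A), w.length ≤ n →
    (∀ z, z <:+: w → Rich z) → ∀ P r : List A, P.reverse = P → r <:+ w →
    CompleteReturn P r → r.reverse = r := by
  intro n
  induction n with
  | zero =>
    intro w hw _ P r _ hrw _
    rw [length_eq_zero_iff.1 (Nat.le_zero.1 hw)] at hrw
    rw [suffix_nil.1 hrw]
    rfl
  | succ n ih =>
    intro w hwn H P r hP hrw hcr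
    by_cases hpal : r.reverse = r
    · exact hpal
    obtain ⟨hPpre, hPsuf, hocc⟩ := hcr
    by_cases hrP : P.length = r.length
    · exact absurd ((hPpre.eq_of_length hrP) ▸ hP) hpal
    have hPlt : P.length < r.length := lt_of_le_of_ne hPpre.length_le hrP
    have hrne : r ≠ [] := by
      intro h
      rw [h] at hPlt
      simp at hPlt
    have hwne : w ≠ [] := by
      intro h
      rw [h, List.suffix_nil] at hrw
      exact hrne hrw
    have hrich : Rich w := H w (infix_rfl)
    have hrlen : r.length ≤ w.length := hrw.length_le
    -- the longest palindromic suffix of r is P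
    have hlpsr : lps r = P := by
      have h1 : P.length ≤ (lps r).length := lps_longest hPsuf hP
      by_cases h2 : lps r = r
      · exfalso
        apply hpal
        rw [← h2]
        exact lps_pal r
      · have hlt : (lps r).length < r.length :=
          lt_of_le_of_ne (lps_suffix r).length_le
            (fun hh => h2 ((lps_suffix r).eq_of_length hh))
        have h3 : P <:+ lps r := suffix_of_suffix_le hPsuf (lps_suffix r) h1
        have h4 : P <+: lps r := by
          have h5 := reverse_prefix.2 h3
          rwa [hP, lps_pal] at h5
        obtain ⟨s, hs⟩ := lps_suffix r
        have hsl : s.length = r.length - (lps r).length := by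
          have h6 := congrArg List.length hs
          simp at h6
          omega
        have hocc2 : Occ P r (r.length - (lps r).length + P.length) := by
          apply occ_of_prefix_drop (by omega)
          have h7 : r.drop (r.length - (lps r).length) = lps r := by
            rw [← hsl]
            conv_lhs => rw [← hs]
            exact drop_left
          rw [h7]
          exact h4
        rcases hocc _ hocc2 with h | h
        · exfalso; omega
        · exact (h3.eq_of_length (by omega)).symm
    by_cases hLr : (lps w).length ≤ r.length
    · -- impossible: P = lps w would occur twice
      exfalso
      have h1 : lps w <:+ r := suffix_of_suffix_le (lps_suffix w) hrw hLr
      have h1' : (lps w).length ≤ (lps r).length := lps_longest h1 (lps_pal w)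
      rw [hlpsr] at h1'
      have h2 : P.length ≤ (lps w).length := lps_longest (hPsuf.trans hrw) hP
      have h3 : P = lps w :=
        (suffix_of_suffix_le (hPsuf.trans hrw) (lps_suffix w) h2).eq_of_length
          (le_antisymm h2 h1')
      obtain ⟨s, hs⟩ := hrw
      have hsl : s.length = w.length - r.length := by
        have h6 := congrArg List.length hs
        simp at h6
        omega
      have hocc3 : Occ P w (w.length - r.length + P.length) := by
        apply occ_of_prefix_drop (by omega)
        have h7 : w.drop (w.length - r.length) = r := by
          rw [← hsl]
          conv_lhs => rw [← hs]
          exact drop_left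
        rw [h7]
        exact hPpre
      rw [h3] at hocc3
      have := occ_lps_eq_length hrich hwne hocc3
      omega
    · -- r is a proper suffix of the palindrome lps w; use the mirror image
      push_neg at hLr
      have h1 : r <:+ lps w := suffix_of_suffix_le hrw (lps_suffix w) (le_of_lt hLr)
      have h2 : r.reverse <+: lps w := by
        have h5 := reverse_prefix.2 h1
        rwa [lps_pal] at h5
      obtain ⟨s, hs⟩ := lps_suffix w
      have hsl : s.length = w.length - (lps w).length := by
        have h6 := congrArg List.length hs
        simp at h6
        omega
      have hLw : (lps w).length ≤ w.length := (lps_suffix w).length_le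
      set c := w.length - (lps w).length + r.length with hc
      have hw₁ : r.reverse <:+ w.take c := by
        have h7 : w.take c = s ++ (lps w).take r.length := by
          conv_lhs => rw [← hs]
          rw [take_append]
          congr 1
          · exact take_of_length_le (by omega)
          · congr 1
            omega
        have h8 : (lps w).take r.length = r.reverse := by
          have := prefix_iff_eq_take.1 h2
          rw [length_reverse] at this
          exact this.symm
        rw [h7, h8]
        exact suffix_append _ _
      have hcr' : CompleteReturn P r.reverse := by
        refine ⟨?_, ?_, ?_⟩
        · have h9 := reverse_prefix.2 hPsuf
          rwa [hP] at h9
        · have h9 := reverse_suffix.2 hPpre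
          rwa [hP] at h9
        · intro t hocc4
          have h10 := occ_reverse hocc4
          rw [hP] at h10
          have h11 := hocc _ h10
          have h12 := hocc4.len_le
          have h13 : t ≤ r.length := by
            have := hocc4.1
            simpa using this
          rcases h11 with h | h
          · right
            rw [length_reverse]
            omega
          · left
            omega
      have hc_lt : c < w.length := by omega
      have H₁ : ∀ z, z <:+: w.take c → Rich z :=
        fun z hz => H z (hz.trans (take_prefix _ _).isInfix)
      have hres := ih (w.take c) (by simp [length_take]; omega) H₁ P r.reverse hP hw₁ hcr'
      rw [reverse_reverse] at hres
      exact hres.symm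
lemma occ_suffix_of_occ {u z w : List A} {c : ℕ} (h : Occ u w c) (hz : z <:+ u) :
    Occ z w c := ⟨h.1, hz.trans h.2⟩

lemma occ_prefix_of_occ {u z w : List A} {c : ℕ} (h : Occ u w c) (hz : z <+: u) :
    Occ z w (c - u.length + z.length) := by
  have h1 := prefix_drop_of_occ h
  have h2 := h.1
  exact occ_of_prefix_drop (by omega) (hz.trans h1)

lemma lpp_length_pos {w : List A} (hw : w ≠ []) : 0 < (lpp w).length := by
  rw [← lps_reverse]
  exact lps_length_pos (by simpa using hw)

/-- The key descent step: if `z` occurs ending at `c` and its longest palindromic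
suffix also occurs ending before `c`, then `z.reverse` occurs ending before `c`. -/
lemma descent {w z : List A} (H : ∀ z', z' <:+: w → Rich z') (hz0 : z ≠ [])
    {c e : ℕ} (hc : Occ z w c) (he : Occ (lps z) w e) (hec : e < c) :
    ∃ c', c' < c ∧ Occ z.reverse w c' := by
  classical
  have hzc := hc.len_le
  have hcw : c ≤ w.length := hc.1
  have hql' : 0 < (lps z).length := lps_length_pos hz0
  have hq_c : Occ (lps z) w c := occ_suffix_of_occ hc (lps_suffix z)
  have hinner : ∀ t, Occ (lps z) w t → c - z.length + (lps z).length ≤ t → t < c → False := by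
    intro t ht h1 h2
    have h3 := occ_within hc ht h1 (le_of_lt h2)
    have h4 := occ_lps_eq_length (H z hc.infix) hz0 h3
    omega
  set e0 := Nat.findGreatest (fun t => Occ (lps z) w t) (c-1) with he0def
  have he0 : Occ (lps z) w e0 := Nat.findGreatest_spec (m := e) (by omega) he
  have he0_le : e0 ≤ c - 1 := Nat.findGreatest_le _
  have hgr : ∀ t, e0 < t → t ≤ c - 1 → ¬ Occ (lps z) w t :=
    fun t h1 h2 => Nat.findGreatest_is_greatest h1 h2
  have hql : (lps z).length ≤ e0 := he0.len_le
  have he0_lt : e0 < c - z.length + (lps z).length := by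
    by_contra h
    push_neg at h
    exact hinner e0 he0 h (by omega)
  set r := (w.take c).drop (e0 - (lps z).length) with hr
  have hrlen : r.length = c - (e0 - (lps z).length) := by
    rw [hr, length_drop, length_take]
    omega
  have hrsuf : r <:+ w.take c := drop_suffix _ _
  have hqpre : (lps z) <+: r := by
    have h6 := occ_take he0 (by omega : e0 ≤ c)
    have h7 := prefix_drop_of_occ h6
    rwa [← hr] at h7
  have hqsuf : (lps z) <:+ r := by
    have h7 : (lps z) <:+ w.take c := hq_c.2
    exact suffix_of_suffix_le h7 hrsuf (by omega)
  have hcrr : CompleteReturn (lps z) r := by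
    refine ⟨hqpre, hqsuf, ?_⟩
    intro t ht
    have htr : t ≤ r.length := by
      have := ht.1
      omega
    have htq : (lps z).length ≤ t := ht.len_le
    have h8 : Occ (lps z) w (e0 - (lps z).length + t) := by
      have h9 := occ_shift (by rw [length_take]; omega) ht
      exact occ_of_occ_take h9
    by_cases hcase : e0 - (lps z).length + t < c
    · left
      by_contra hne
      have h10 : e0 < e0 - (lps z).length + t := by omega
      exact hgr _ h10 (by omega) h8
    · right
      omega
  have hrpal : r.reverse = r :=
    complete_return_pal (w.take c).length (w.take c) le_rfl
      (fun z' hz' => H z' (hz'.trans (take_prefix _ _).isInfix)) (lps z) r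
      (lps_pal z) hrsuf hcrr
  have hzr : z <:+ r := suffix_of_suffix_le hc.2 hrsuf (by omega)
  have hzrev : z.reverse <+: r := by
    have h11 := reverse_prefix.2 hzr
    rwa [hrpal] at h11
  have hfin : Occ z.reverse w (e0 - (lps z).length + z.reverse.length) := by
    have h12 := occ_of_prefix_drop (m := e0 - (lps z).length) (by rw [length_take]; omega) hzrev
    exact occ_of_occ_take h12
  refine ⟨e0 - (lps z).length + z.reverse.length, ?_, hfin⟩
  rw [length_reverse]
  omega

lemma min_no_earlier {w z : List A} (H : ∀ z', z' <:+: w → Rich z') (hz0 : z ≠ [])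
    {c : ℕ} (hzc : Occ z w c)
    (hmin : ∀ c', Occ z w c' ∨ Occ z.reverse w c' → c ≤ c') :
    ∀ e, Occ (lps z) w e → c ≤ e := by
  intro e he
  by_contra h
  push_neg at h
  obtain ⟨c', hc'1, hc'2⟩ := descent H hz0 hzc he h
  exact absurd (hmin c' (Or.inr hc'2)) (by omega)

lemma suffix_uniq {v u : List A} (hrich : Rich v) (huv : u <:+ v)
    (hne : u.length < v.length) (hlpp : lpp v <+: u) : False := by
  have hv0 : v ≠ [] := by
    intro h
    rw [h] at hne
    simp at hne
  apply rich_lpp_not_infix_tail hrich hv0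
  obtain ⟨s, hs⟩ := huv
  have hs1 : 1 ≤ s.length := by
    have := congrArg List.length hs
    simp at this
    omega
  have h2 : u <:+ v.drop 1 := by
    conv_rhs => rw [← hs]
    rw [drop_append, Nat.sub_eq_zero_of_le hs1, drop_zero]
    exact suffix_append _ _
  exact hlpp.isInfix.trans h2.isInfix

/-- two words ending at a common position, with the same longest palindromic
prefix, are equal -/
lemma suffix_same_end {w u v T : List A} (H : ∀ z', z' <:+: w → Rich z')
    (hvw : v <:+: w) (huw : u <:+: w)
    (hu : u <:+ T) (hv : v <:+ T) (hlpp : lpp u = lpp v) : u = v := by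
  rcases le_total u.length v.length with hle | hle
  · have h1 : u <:+ v := suffix_of_suffix_le hu hv hle
    rcases eq_or_lt_of_le hle with heq | hlt
    · exact h1.eq_of_length heq
    · exact absurd (suffix_uniq (H v hvw) h1 hlt (by rw [← hlpp]; exact lpp_prefix u)) not_false
  · have h1 : v <:+ u := suffix_of_suffix_le hv hu hle
    rcases eq_or_lt_of_le hle with heq | hlt
    · exact (h1.eq_of_length heq).symm
    · exact absurd (suffix_uniq (H u huw) h1 hlt (by rw [hlpp]; exact lpp_prefix v)) not_false

lemma pal_case {w u v : List A} (H : ∀ z, z <:+: w → Rich z)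
    (hv : v <:+: w) (hp : lpp u = lpp v) (hq : lps u = lps v)
    (hupal : u.reverse = u) : u = v := by
  have hlppu : lpp u = u :=
    ((lpp_prefix u).eq_of_length (le_antisymm (lpp_prefix u).length_le
      (lpp_longest prefix_rfl hupal)))
  have hlpsu : lps u = u :=
    ((lps_suffix u).eq_of_length (le_antisymm (lps_suffix u).length_le
      (lps_longest suffix_rfl hupal)))
  have hpv : u <+: v := by rw [← hlppu, hp]; exact lpp_prefix v
  have hqv : u <:+ v := by rw [← hlpsu, hq]; exact lps_suffix v
  rcases eq_or_lt_of_le hpv.length_le with heq | hlt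
  · exact hpv.eq_of_length heq
  · exact absurd (suffix_uniq (H v hv) hqv hlt (by rw [← hp, hlppu])) not_false

theorem main_fin {w u v : List A} (H : ∀ z, z <:+: w → Rich z)
    (hu : u <:+: w) (hv : v <:+: w)
    (hp : lpp u = lpp v) (hq : lps u = lps v) : u = v := by
  classical
  have hlppnil : lpp ([] : List A) = [] := by
    have h3 := (lpp_prefix ([] : List A)).length_le
    exact length_eq_zero_iff.1 (Nat.le_zero.1 (by simpa using h3))
  by_cases hu0 : u = []
  · subst hu0
    by_contra hne
    have hvne : v ≠ [] := fun h => hne h.symm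
    have h1 := lpp_length_pos hvne
    rw [← hp, hlppnil] at h1
    simp at h1
  by_cases hv0 : v = []
  · subst hv0
    by_contra hne
    have h1 := lpp_length_pos hu0
    rw [hp, hlppnil] at h1
    simp at h1
  by_cases hupal : u.reverse = u
  · exact pal_case H hv hp hq hupal
  by_cases hvpal : v.reverse = v
  · exact (pal_case H hu hp.symm hq.symm hvpal).symm
  -- general case
  have hru0 : u.reverse ≠ [] := by simpa using hu0
  have hrv0 : v.reverse ≠ [] := by simpa using hv0
  have hSu : ∃ c, Occ u w c ∨ Occ u.reverse w c := by
    obtain ⟨c, hc⟩ := infix_iff_occ.1 hu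
    exact ⟨c, Or.inl hc⟩
  have hSv : ∃ c, Occ v w c ∨ Occ v.reverse w c := by
    obtain ⟨c, hc⟩ := infix_iff_occ.1 hv
    exact ⟨c, Or.inl hc⟩
  set cu := Nat.find hSu with hcudef
  set cv := Nat.find hSv with hcvdef
  have hcu_min : ∀ c', Occ u w c' ∨ Occ u.reverse w c' → cu ≤ c' :=
    fun c' h => Nat.find_min' hSu h
  have hcv_min : ∀ c', Occ v w c' ∨ Occ v.reverse w c' → cv ≤ c' :=
    fun c' h => Nat.find_min' hSv h
  have hcu_min' : ∀ c', Occ u.reverse w c' ∨ Occ u.reverse.reverse w c' → cu ≤ c' := by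
    intro c' h
    rw [reverse_reverse] at h
    exact hcu_min c' h.symm
  have hcv_min' : ∀ c', Occ v.reverse w c' ∨ Occ v.reverse.reverse w c' → cv ≤ c' := by
    intro c' h
    rw [reverse_reverse] at h
    exact hcv_min c' h.symm
  have hplt : (lpp u).length < u.length := by
    rcases eq_or_lt_of_le (lpp_prefix u).length_le with heq | hlt
    · exact absurd (((lpp_prefix u).eq_of_length heq) ▸ lpp_pal u) hupal
    · exact hlt
  have hqlt : (lps v).length < v.length := by
    rcases eq_or_lt_of_le (lps_suffix v).length_le with heq | hlt
    · exact absurd (((lps_suffix v).eq_of_length heq) ▸ lps_pal v) hvpal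
    · exact hlt
  rcases Nat.find_spec hSu with hcu | hcu <;> rcases Nat.find_spec hSv with hcv | hcv
  · -- both plain: first occurrence of q ends at both cu and cv
    have h1 := min_no_earlier H hu0 hcu hcu_min
    have h2 := min_no_earlier H hv0 hcv hcv_min
    have hqu : Occ (lps u) w cu := occ_suffix_of_occ hcu (lps_suffix u)
    have hqv : Occ (lps u) w cv := by
      rw [hq]
      exact occ_suffix_of_occ hcv (lps_suffix v)
    have hcc : cu = cv := le_antisymm (h1 _ hqv) (by rw [hq] at hqu; exact h2 _ hqu)
    have hcv2 : v <:+ (w.take cu) := by rw [hcc]; exact hcv.2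
    exact suffix_same_end H hv hu hcu.2 hcv2 hp
  · -- u plain, v reversed: contradiction by length counting
    exfalso
    have h1 := min_no_earlier H hu0 hcu hcu_min
    have h2 := min_no_earlier H hrv0 hcv hcv_min'
    rw [lps_reverse] at h2
    -- p occurs at the start of u's occurrence
    have hpu : Occ (lpp u) w (cu - u.length + (lpp u).length) :=
      occ_prefix_of_occ hcu (lpp_prefix u)
    rw [hp] at hpu
    have h3 := h2 _ hpu
    -- q occurs at the start of (rev v)'s occurrence
    have hqrv : Occ (lpp v.reverse) w (cv - v.reverse.length + (lpp v.reverse).length) :=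
      occ_prefix_of_occ hcv (lpp_prefix v.reverse)
    rw [lpp_reverse, length_reverse, ← hq] at hqrv
    have h4 := h1 _ hqrv
    have h5 := hcu.len_le
    have h6 := hcv.len_le
    rw [length_reverse] at h6
    rw [← hp] at h3
    have hq2 : (lps u).length < v.length := hq ▸ hqlt
    omega
  · -- u reversed, v plain: symmetric contradiction
    exfalso
    have h1 := min_no_earlier H hru0 hcu hcu_min'
    have h2 := min_no_earlier H hv0 hcv hcv_min
    rw [lps_reverse] at h1
    have hpv : Occ (lpp v) w (cv - v.length + (lpp v).length) :=
      occ_prefix_of_occ hcv (lpp_prefix v)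
    rw [← hp] at hpv
    have h3 := h1 _ hpv
    have hqru : Occ (lpp u.reverse) w (cu - u.reverse.length + (lpp u.reverse).length) :=
      occ_prefix_of_occ hcu (lpp_prefix u.reverse)
    rw [lpp_reverse, length_reverse, hq] at hqru
    have h4 := h2 _ hqru
    have h5 := hcu.len_le
    rw [length_reverse] at h5
    have h6 := hcv.len_le
    rw [hp] at hplt
    have hq2 : (lps v).length < v.length := hqlt
    rw [hp] at h3
    omega
  · -- both reversed
    have h1 := min_no_earlier H hru0 hcu hcu_min'
    have h2 := min_no_earlier H hrv0 hcv hcv_min'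
    rw [lps_reverse] at h1 h2
    have hpu : Occ (lpp u) w cu := occ_suffix_of_occ hcu (by
      have := reverse_suffix.2 (lpp_prefix u)
      rwa [lpp_pal] at this)
    have hpv : Occ (lpp u) w cv := by
      rw [hp]
      exact occ_suffix_of_occ hcv (by
        have := reverse_suffix.2 (lpp_prefix v)
        rwa [lpp_pal] at this)
    have hcc : cu = cv := le_antisymm (h1 _ (hp ▸ hpv)) (h2 _ (hp ▸ hpu))
    have hlpp2 : lpp u.reverse = lpp v.reverse := by
      rw [lpp_reverse, lpp_reverse, hq]
    have hcv2 : v.reverse <:+ (w.take cu) := by rw [hcc]; exact hcv.2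
    have := suffix_same_end H (hcv.infix) (hcu.infix) hcu.2 hcv2 hlpp2
    exact reverse_injective this
def seg (x : ℕ → A) (i n : ℕ) : List A := (List.range n).map fun k => x (i + k)

lemma seg_length (x : ℕ → A) (i n : ℕ) : (seg x i n).length = n := by simp [seg]

lemma seg_append (x : ℕ → A) (i n m : ℕ) :
    seg x i (n + m) = seg x i n ++ seg x (i + n) m := by
  rw [seg, range_add, map_append, map_map]
  congr 1
  apply map_congr_left
  intro k _
  simp [Function.comp, Nat.add_assoc]

lemma factorOfInf_iff_seg {x : ℕ → A} {u : List A} :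
    FactorOfInf u x ↔ ∃ i, u = seg x i u.length := Iff.rfl

lemma factorOfInf_of_infix_seg {x : ℕ → A} {z : List A} {i n : ℕ}
    (h : z <:+: seg x i n) : FactorOfInf z x := by
  obtain ⟨s, t, hst⟩ := h
  have hlen : n = s.length + (z.length + t.length) := by
    have := congrArg List.length hst
    simp [seg_length] at this
    omega
  rw [hlen, seg_append, seg_append] at hst
  rw [append_assoc] at hst
  have h1 := append_inj hst (by simp [seg_length])
  have h2 := append_inj h1.2 (by simp [seg_length])
  exact ⟨i + s.length, h2.1⟩

lemma factorOfInf_infix {x : ℕ → A} {u z : List A} (hu : FactorOfInf u x)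
    (hz : z <:+: u) : FactorOfInf z x := by
  obtain ⟨i, hi⟩ := hu
  rw [hi] at hz
  exact factorOfInf_of_infix_seg hz

lemma seg_zero_infix {x : ℕ → A} {i n N : ℕ} (h : i + n ≤ N) :
    seg x i n <:+: seg x 0 N := by
  have hN : N = i + n + (N - i - n) := by omega
  rw [hN, seg_append, seg_append]
  simp only [Nat.zero_add]
  exact ⟨seg x 0 i, seg x (i + n) (N - i - n), rfl⟩
lemma rich_of_all_prefixes {u : List A}
    (h : ∀ s, s <+: u → s ≠ [] → lps s ∉ palFactors s.dropLast) : Rich u := by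
  induction u using List.reverseRecOn with
  | nil => exact rich_nil
  | append_singleton u' a ih =>
    rw [rich_concat_iff]
    refine ⟨ih (fun s hs h0 => h s (hs.trans (prefix_append _ _)) h0), ?_⟩
    have h2 := h (u' ++ [a]) prefix_rfl (by simp)
    rwa [dropLast_concat] at h2

lemma occ_of_occ_dropLast {z s : List A} {t : ℕ} (h : Occ z s.dropLast t) : Occ z s t := by
  rw [dropLast_eq_take] at h
  exact occ_of_occ_take h

theorem not_rich_witness {x : ℕ → A}
    (hyp : ∀ u v p q : List A, FactorOfInf u x → FactorOfInf v x →
      LongestPalPrefix p u → LongestPalPrefix p v →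
      LongestPalSuffix q u → LongestPalSuffix q v → u = v)
    (u : List A) (hufac : FactorOfInf u x) : Rich u := by
  classical
  by_contra hnr
  have hs : ∃ s, s <+: u ∧ s ≠ [] ∧ lps s ∈ palFactors s.dropLast := by
    by_contra hc
    push_neg at hc
    exact hnr (rich_of_all_prefixes hc)
  obtain ⟨s, hsu, hs0, hmem⟩ := hs
  have hsfac : FactorOfInf s x := factorOfInf_infix hufac hsu.isInfix
  have hP := mem_palFactors.1 hmem
  have hPpal : (lps s).reverse = lps s := lps_pal s
  have hslen : 1 ≤ s.length := by
    rcases Nat.eq_zero_or_pos s.length with h | h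
    · exact absurd (length_eq_zero_iff.1 h) hs0
    · exact h
  -- an occurrence of lps s strictly before the end of s
  have hocc0 : ∃ t0, t0 ≤ s.length - 1 ∧ Occ (lps s) s t0 := by
    obtain ⟨t0, ht0⟩ := infix_iff_occ.1 hP.1
    have h1 := ht0.1
    rw [length_dropLast] at h1
    exact ⟨t0, h1, occ_of_occ_dropLast ht0⟩
  set t := Nat.findGreatest (fun t => Occ (lps s) s t) (s.length - 1) with htdef
  obtain ⟨t0, ht0le, ht0⟩ := hocc0
  have ht : Occ (lps s) s t := Nat.findGreatest_spec ht0le ht0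
  have ht_le : t ≤ s.length - 1 := Nat.findGreatest_le _
  have hgr : ∀ t', t < t' → t' ≤ s.length - 1 → ¬ Occ (lps s) s t' :=
    fun t' h1 h2 => Nat.findGreatest_is_greatest h1 h2
  have htP : (lps s).length ≤ t := ht.len_le
  set u₀ := s.drop (t - (lps s).length) with hu₀
  have hu₀len : u₀.length = s.length - (t - (lps s).length) := by
    rw [hu₀, length_drop]
  have hu₀suf : u₀ <:+ s := drop_suffix _ _
  have hPlt : (lps s).length < u₀.length := by omega
  have hLPS : LongestPalSuffix (lps s) u₀ := by
    refine ⟨suffix_of_suffix_le (lps_suffix s) hu₀suf (by omega), hPpal, ?_⟩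
    intro q' hq' hq'pal
    exact lps_longest (hq'.trans hu₀suf) hq'pal
  have hLPP : LongestPalPrefix (lps s) u₀ := by
    have hPpre : (lps s) <+: u₀ := prefix_drop_of_occ ht
    refine ⟨hPpre, hPpal, ?_⟩
    intro p' hp' hp'pal
    by_contra hgt
    push_neg at hgt
    rcases eq_or_lt_of_le hp'.length_le with heq | hlt
    · -- p' = u₀, so u₀ is a palindromic suffix of s longer than lps s
      have : p' = u₀ := hp'.eq_of_length heq
      subst this
      have := lps_longest hu₀suf hp'pal
      omega
    · have h1 : (lps s) <+: p' := prefix_of_prefix_length_le hPpre hp' (le_of_lt hgt)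
      have h2 : (lps s) <:+ p' := by
        have h3 := reverse_suffix.2 h1
        rwa [hPpal, hp'pal] at h3
      have h4 : Occ (lps s) u₀ p'.length := by
        refine ⟨by omega, ?_⟩
        rw [← prefix_iff_eq_take.1 hp']
        exact h2
      have h5 : Occ (lps s) s (t - (lps s).length + p'.length) := by
        apply occ_shift (by omega)
        rwa [← hu₀]
      exact hgr _ (by omega) (by omega) h5
  have hLPSP : LongestPalSuffix (lps s) (lps s) :=
    ⟨suffix_rfl, hPpal, fun q' hq' _ => hq'.length_le⟩
  have hLPPP : LongestPalPrefix (lps s) (lps s) :=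
    ⟨prefix_rfl, hPpal, fun p' hp' _ => hp'.length_le⟩
  have heq := hyp u₀ (lps s) (lps s) (lps s)
    (factorOfInf_infix hsfac hu₀suf.isInfix)
    (factorOfInf_infix hsfac (lps_suffix s).isInfix)
    hLPP hLPPP hLPS hLPSP
  have := congrArg List.length heq
  omega


end Aux

/-- An infinite word `x` is rich if and only if any two factors `u` and `v` of `x`
having the same longest palindromic prefix and the same longest palindromic suffix
are equal. -/
theorem richInf_iff_factors_determined_by_pal_prefix_suffix {A : Type*} [DecidableEq A]
    (x : ℕ → A) :
    RichInf x ↔ ∀ u v p q : List A, FactorOfInf u x → FactorOfInf v x →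
      LongestPalPrefix p u → LongestPalPrefix p v →
      LongestPalSuffix q u → LongestPalSuffix q v → u = v := by
  constructor
  · intro hR u v p q hu hv hpu hpv hqu hqv
    obtain ⟨i, hi⟩ := hu
    obtain ⟨j, hj⟩ := hv
    set N := max (i + u.length) (j + v.length) with hN
    have H : ∀ z, z <:+: seg x 0 N → Rich z :=
      fun z hz => hR z (factorOfInf_of_infix_seg hz)
    have hu' : u <:+: seg x 0 N := by
      rw [hi]
      exact seg_zero_infix (by omega)
    have hv' : v <:+: seg x 0 N := by
      rw [hj]
      exact seg_zero_infix (by omega)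
    exact main_fin H hu' hv'
      (by rw [← lpp_eq_iff.1 hpu, ← lpp_eq_iff.1 hpv])
      (by rw [← lps_eq_iff.1 hqu, ← lps_eq_iff.1 hqv])
  · intro hyp u hufac
    exact not_rich_witness hyp u hufac
end

section
/- Let x be an infinite word. Then x is rich if and only if every non-empty prefix of x has a unioccurrent palindromic suffix. -/
/-- A non-empty word `u` is unioccurrent in `v` if there is exactly one pair of
words `(s, t)` with `v = s ++ u ++ t`. -/
def Unioccurrent {A : Type*} (u v : List A) : Prop :=
  u ≠ [] ∧ ∃! st : List A × List A, v = st.1 ++ u ++ st.2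

namespace RichAux
open List

set_option linter.unusedSectionVars false
variable {A : Type*} [DecidableEq A]

lemma infix_iff_suffix_prefix {u w : List A} : u <:+: w ↔ ∃ p, p <+: w ∧ u <:+ p := by
  constructor
  · rintro ⟨s, t, rfl⟩
    exact ⟨s ++ u, ⟨t, by simp⟩, ⟨s, rfl⟩⟩
  · rintro ⟨p, ⟨t, rfl⟩, ⟨s, rfl⟩⟩
    exact ⟨s, t, rfl⟩

lemma mem_palFactors {u w : List A} : u ∈ palFactors w ↔ u <:+: w ∧ u.reverse = u := by
  simp [palFactors, List.mem_inits, List.mem_tails, infix_iff_suffix_prefix]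

lemma nil_mem_palFactors (w : List A) : [] ∈ palFactors w :=
  mem_palFactors.2 ⟨nil_infix (l := w), rfl⟩

lemma palFactors_mono {v w : List A} (h : v <:+: w) : palFactors v ⊆ palFactors w := by
  intro u hu
  rw [mem_palFactors] at hu ⊢
  exact ⟨hu.1.trans h, hu.2⟩

lemma infix_concat {u w : List A} {a : A} (h : u <:+: w ++ [a]) :
    u <:+: w ∨ u <:+ w ++ [a] := by
  obtain ⟨s, t, ht⟩ := h
  rcases t.eq_nil_or_concat with rfl | ⟨t', b, rfl⟩
  · right; exact ⟨s, by simpa using ht⟩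
  · left
    have h2 : (s ++ u ++ t') ++ [b] = w ++ [a] := by simpa using ht
    have hlen : (s ++ u ++ t').length = w.length := by
      have := congrArg List.length h2; simp at this ⊢; omega
    obtain ⟨hw, -⟩ := append_inj h2 hlen
    exact ⟨s, t', hw⟩


lemma infix_of_concat_eq {s u t w : List A} {a : A}
    (h : s ++ u ++ t = w ++ [a]) (ht : t ≠ []) : u <:+: w := by
  rcases t.eq_nil_or_concat with rfl | ⟨t', b, rfl⟩
  · exact absurd rfl ht
  have h2 : (s ++ u ++ t') ++ [b] = w ++ [a] := by simpa using h
  have hlen : (s ++ u ++ t').length = w.length := by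
    have := congrArg List.length h2; simp at this ⊢; omega
  obtain ⟨hw, -⟩ := append_inj h2 hlen
  exact ⟨s, t', hw⟩

lemma new_pal_suffix {w : List A} {a : A} {u : List A}
    (hu : u ∈ palFactors (w ++ [a])) (hnew : u ∉ palFactors w) : u <:+ w ++ [a] := by
  rw [mem_palFactors] at hu hnew
  rcases infix_concat hu.1 with h | h
  · exact absurd ⟨h, hu.2⟩ hnew
  · exact h

lemma suffix_of_suffix_length_le' {l₁ l₂ l₃ : List A} (h₁ : l₁ <:+ l₃) (h₂ : l₂ <:+ l₃)
    (h : l₁.length ≤ l₂.length) : l₁ <:+ l₂ := by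
  rw [← List.reverse_prefix] at h₁ h₂ ⊢
  exact List.prefix_of_prefix_length_le h₁ h₂ (by simpa using h)

lemma new_pal_unique {w : List A} {a : A} {u₁ u₂ : List A}
    (h1 : u₁ ∈ palFactors (w ++ [a])) (hn1 : u₁ ∉ palFactors w)
    (h2 : u₂ ∈ palFactors (w ++ [a])) (hn2 : u₂ ∉ palFactors w) : u₁ = u₂ := by
  wlog hle : u₁.length ≤ u₂.length generalizing u₁ u₂
  · exact (this h2 hn2 h1 hn1 (le_of_not_ge hle)).symm
  have hs1 := new_pal_suffix h1 hn1
  have hs2 := new_pal_suffix h2 hn2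
  have hsuf : u₁ <:+ u₂ := suffix_of_suffix_length_le' hs1 hs2 hle
  -- u₁ is a prefix of u₂ since both are palindromes
  have hpre : u₁ <+: u₂ := by
    have := List.reverse_prefix.2 hsuf
    rwa [(mem_palFactors.1 h1).2, (mem_palFactors.1 h2).2] at this
  rcases eq_or_lt_of_le hle with heq | hlt
  · exact hpre.eq_of_length heq
  · exfalso
    obtain ⟨t, rfl⟩ := hpre
    obtain ⟨s, hs⟩ := hs2
    have ht : t ≠ [] := by
      intro h; subst h; simp at hlt
    have : u₁ <:+: w := infix_of_concat_eq (s := s) (t := t) (by rw [← hs]; simp) ht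
    exact hn1 (mem_palFactors.2 ⟨this, (mem_palFactors.1 h1).2⟩)

lemma uniocc_iff_new {w : List A} {a : A} {s : List A} (hs : s <:+ w ++ [a]) (hne : s ≠ []) :
    Unioccurrent s (w ++ [a]) ↔ ¬ s <:+: w := by
  obtain ⟨t, ht⟩ := hs
  constructor
  · rintro ⟨-, st₀, hst₀, huniq⟩ ⟨p, q, hpq⟩
    have e1 : (p, q ++ [a]) = st₀ := huniq (p, q ++ [a]) (by rw [← hpq]; simp)
    have e2 : (t, ([] : List A)) = st₀ := huniq (t, []) (by rw [← ht]; simp)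
    have : q ++ [a] = ([] : List A) := by
      have := e1.trans e2.symm
      exact (Prod.mk.injEq .. ▸ this).2
    simp at this
  · intro hnot
    refine ⟨hne, (t, []), by simpa using ht.symm, ?_⟩
    rintro ⟨p, q⟩ hpq
    simp only at hpq
    rcases q.eq_nil_or_concat with rfl | ⟨q', b, rfl⟩
    · have : p ++ s = t ++ s := by rw [← ht] at hpq; simpa using hpq.symm
      have := append_cancel_right this
      simp [this]
    · exact absurd (infix_of_concat_eq (s := p) (t := q' ++ [b]) (a := a) (by simpa using hpq.symm) (by simp)) hnot


def HasUPS (v : List A) : Prop :=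
  ∃ s : List A, s <:+ v ∧ s.reverse = s ∧ Unioccurrent s v

lemma hasUPS_iff_new {w : List A} {a : A} :
    HasUPS (w ++ [a]) ↔ ∃ s, s ∈ palFactors (w ++ [a]) ∧ s ∉ palFactors w := by
  constructor
  · rintro ⟨s, hsuf, hpal, huni⟩
    have hne : s ≠ [] := huni.1
    have hnot : ¬ s <:+: w := (uniocc_iff_new hsuf hne).1 huni
    exact ⟨s, mem_palFactors.2 ⟨hsuf.isInfix, hpal⟩,
      fun hmem => hnot (mem_palFactors.1 hmem).1⟩
  · rintro ⟨s, hmem, hnew⟩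
    have hsuf := new_pal_suffix hmem hnew
    have hne : s ≠ [] := by rintro rfl; exact hnew (nil_mem_palFactors w)
    have hpal := (mem_palFactors.1 hmem).2
    have hnot : ¬ s <:+: w := fun h => hnew (mem_palFactors.2 ⟨h, hpal⟩)
    exact ⟨s, hsuf, hpal, (uniocc_iff_new hsuf hne).2 hnot⟩

lemma card_palFactors_concat {w : List A} {a : A} :
    (palFactors (w ++ [a])).card =
      (palFactors w).card + (palFactors (w ++ [a]) \ palFactors w).card := by
  have hsub : palFactors w ⊆ palFactors (w ++ [a]) :=
    palFactors_mono ⟨[], [a], by simp⟩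
  rw [add_comm, Finset.card_sdiff_add_card_eq_card hsub]

lemma card_diff_le {w : List A} {a : A} :
    (palFactors (w ++ [a]) \ palFactors w).card ≤ 1 := by
  apply Finset.card_le_one.2
  intro u₁ h1 u₂ h2
  rw [Finset.mem_sdiff] at h1 h2
  exact new_pal_unique h1.1 h1.2 h2.1 h2.2

lemma card_palFactors_le (w : List A) : (palFactors w).card ≤ w.length + 1 := by
  induction w using List.reverseRecOn with
  | nil => simp [palFactors, List.inits]
  | append_singleton w a ih =>
    have := card_diff_le (w := w) (a := a)
    rw [card_palFactors_concat (w := w) (a := a)]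
    simp only [List.length_append, List.length_cons, List.length_nil]
    omega

lemma rich_nil : Rich ([] : List A) := by
  simp [Rich, palFactors, List.inits]

lemma rich_step {w : List A} {a : A} :
    Rich (w ++ [a]) ↔ Rich w ∧ HasUPS (w ++ [a]) := by
  have hcard := card_palFactors_concat (w := w) (a := a)
  have hdle := card_diff_le (w := w) (a := a)
  have hwle := card_palFactors_le w
  have hnew : HasUPS (w ++ [a]) ↔ (palFactors (w ++ [a]) \ palFactors w).Nonempty := by
    rw [hasUPS_iff_new]
    simp [Finset.Nonempty, Finset.mem_sdiff]
  constructor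
  · intro h
    unfold Rich at h ⊢
    simp only [List.length_append, List.length_cons, List.length_nil] at h
    have hdiff : (palFactors (w ++ [a]) \ palFactors w).card = 1 := by omega
    refine ⟨by omega, hnew.2 (Finset.card_pos.1 (by omega))⟩
  · rintro ⟨hw, hups⟩
    have hdiff : (palFactors (w ++ [a]) \ palFactors w).card = 1 :=
      le_antisymm hdle (Finset.card_pos.2 (hnew.1 hups))
    unfold Rich at hw ⊢
    simp only [List.length_append, List.length_cons, List.length_nil]
    omega

lemma rich_of_rich_append {p : List A} : ∀ r : List A, Rich (p ++ r) → Rich p := by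
  intro r
  induction r using List.reverseRecOn with
  | nil => simpa
  | append_singleton r a ih =>
    intro h
    rw [← List.append_assoc] at h
    exact ih (rich_step.1 h).1

lemma rich_prefix {w p : List A} (hw : Rich w) (hp : p <+: w) : Rich p := by
  obtain ⟨r, rfl⟩ := hp
  exact rich_of_rich_append r hw

lemma palFactors_reverse (w : List A) : palFactors w.reverse = palFactors w := by
  ext u
  simp only [mem_palFactors]
  constructor
  · rintro ⟨hinf, hpal⟩
    refine ⟨?_, hpal⟩
    rw [← List.reverse_infix, hpal]
    exact hinf
  · rintro ⟨hinf, hpal⟩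
    refine ⟨?_, hpal⟩
    rw [← List.reverse_infix] at hinf
    rwa [hpal] at hinf

lemma rich_reverse {w : List A} (hw : Rich w) : Rich w.reverse := by
  unfold Rich at hw ⊢
  rwa [palFactors_reverse, List.length_reverse]

lemma rich_suffix {w s : List A} (hw : Rich w) (hs : s <:+ w) : Rich s := by
  have h1 : s.reverse <+: w.reverse := List.reverse_prefix.2 hs
  have := rich_prefix (rich_reverse hw) h1
  have := rich_reverse this
  simpa using this

lemma rich_hasUPS {v : List A} (hv : Rich v) (hne : v ≠ []) : HasUPS v := by
  rcases v.eq_nil_or_concat with rfl | ⟨w, a, rfl⟩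
  · exact absurd rfl hne
  · rw [List.concat_eq_append] at hv ⊢
    exact (rich_step.1 hv).2

end RichAux

/-- An infinite word `x` is rich if and only if every non-empty prefix of `x` has a
unioccurrent palindromic suffix.  (A prefix of `x` is a factor of `x` occurring at
position `0`.) -/
theorem richInf_iff_prefixes_have_unioccurrent_pal_suffix {A : Type*} [DecidableEq A]
    (x : ℕ → A) :
    RichInf x ↔ ∀ p : List A, p = ((List.range p.length).map fun k => x k) → p ≠ [] →
      ∃ s : List A, s <:+ p ∧ s.reverse = s ∧ Unioccurrent s p := by
  constructor
  · intro h p hp hne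
    have hfac : FactorOfInf p x := ⟨0, by simpa using hp⟩
    exact RichAux.rich_hasUPS (h p hfac) hne
  · intro h u hu
    obtain ⟨i, hu⟩ := hu
    have key : ∀ m : ℕ, Rich ((List.range m).map x) := by
      intro m
      induction m with
      | zero => simpa using RichAux.rich_nil
      | succ m ih =>
        have hsplit : (List.range (m + 1)).map x = (List.range m).map x ++ [x m] := by
          rw [List.range_succ, List.map_append]; rfl
        rw [hsplit]
        refine RichAux.rich_step.2 ⟨ih, ?_⟩
        rw [← hsplit]
        exact h _ (by simp) (by simp [hsplit])
    have hsuf : u <:+ (List.range (i + u.length)).map x := by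
      refine ⟨(List.range i).map x, ?_⟩
      conv_lhs => rw [hu]
      rw [List.range_add, List.map_append, List.map_map]
      simp [Function.comp]
    exact RichAux.rich_suffix (key _) hsuf
end
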